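/- Let Ω ⊆ ℝ³ be open, let α, β : Ω → ℍ be differentiable, and let h₀ : Ω → ℝ be twice differentiable. Define v := ∇h₀ − h₀·α − h₀·star(β) (the result of applying the operator D − M^α C − conj(β) to the scalar function h₀). Then for every x ∈ Ω: Sc( Dv(x) − α(x)·star(v(x)) − β(x)·v(x) ) = −Δh₀(x) + ( |α(x)|² + |β(x)|² + div(Vec α)(x) − div(Vec β)(x) + 2·Sc(α(x)·β(x)) )·h₀(x). In other words, the Schrödinger operator −Δ + |α|² + |β|² + div(Vec α) − div(Vec β) + 2·Sc(αβ) on scalar functions is the scalar part of the composition (D − αC − β)(D − M^α C − conj(β)). -/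

import Mathlib

open MeasureTheory

noncomputable section

/-- The quaternion unit `i`. -/
def qi : Quaternion ℝ := ⟨0, 1, 0, 0⟩
/-- The quaternion unit `j`. -/
def qj : Quaternion ℝ := ⟨0, 0, 1, 0⟩
/-- The quaternion unit `k`. -/
def qk : Quaternion ℝ := ⟨0, 0, 0, 1⟩

/-- Partial derivative of a quaternion-valued function on `ℝ³`. -/
def pd (i : Fin 3) (w : (Fin 3 → ℝ) → Quaternion ℝ) (x : Fin 3 → ℝ) : Quaternion ℝ :=
  fderiv ℝ w x (Pi.single i 1)

/-- Partial derivative of a real-valued function on `ℝ³`. -/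
def pdR (i : Fin 3) (u : (Fin 3 → ℝ) → ℝ) (x : Fin 3 → ℝ) : ℝ :=
  fderiv ℝ u x (Pi.single i 1)

/-- Moisil–Teodorescu operator `Dw = i ∂₁ w + j ∂₂ w + k ∂₃ w`. -/
def Dq (w : (Fin 3 → ℝ) → Quaternion ℝ) (x : Fin 3 → ℝ) : Quaternion ℝ :=
  qi * pd 0 w x + qj * pd 1 w x + qk * pd 2 w x

/-- Gradient of a real-valued function, viewed as a pure quaternion. -/
def gradq (u : (Fin 3 → ℝ) → ℝ) (x : Fin 3 → ℝ) : Quaternion ℝ :=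
  ⟨0, pdR 0 u x, pdR 1 u x, pdR 2 u x⟩

/-- Laplacian of a real-valued function on `ℝ³`. -/
def lapl (u : (Fin 3 → ℝ) → ℝ) (x : Fin 3 → ℝ) : ℝ :=
  pdR 0 (pdR 0 u) x + pdR 1 (pdR 1 u) x + pdR 2 (pdR 2 u) x

/-- Vector (non-scalar) part of a quaternion. -/
def Vecq (q : Quaternion ℝ) : Quaternion ℝ := q - (q.re : Quaternion ℝ)

/-- Divergence of the vector part of a quaternion-valued function. -/
def divVec (α : (Fin 3 → ℝ) → Quaternion ℝ) (x : Fin 3 → ℝ) : ℝ :=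
  pdR 0 (fun y => (α y).imI) x + pdR 1 (fun y => (α y).imJ) x + pdR 2 (fun y => (α y).imK) x

/-! ### Auxiliary material -/

@[simp] lemma qi_re : qi.re = 0 := rfl
@[simp] lemma qi_imI : qi.imI = 1 := rfl
@[simp] lemma qi_imJ : qi.imJ = 0 := rfl
@[simp] lemma qi_imK : qi.imK = 0 := rfl
@[simp] lemma qj_re : qj.re = 0 := rfl
@[simp] lemma qj_imI : qj.imI = 0 := rfl
@[simp] lemma qj_imJ : qj.imJ = 1 := rfl
@[simp] lemma qj_imK : qj.imK = 0 := rfl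
@[simp] lemma qk_re : qk.re = 0 := rfl
@[simp] lemma qk_imI : qk.imI = 0 := rfl
@[simp] lemma qk_imJ : qk.imJ = 0 := rfl
@[simp] lemma qk_imK : qk.imK = 1 := rfl

@[simp] lemma gradq_re (u : (Fin 3 → ℝ) → ℝ) (x : Fin 3 → ℝ) : (gradq u x).re = 0 := rfl
@[simp] lemma gradq_imI (u : (Fin 3 → ℝ) → ℝ) (x : Fin 3 → ℝ) : (gradq u x).imI = pdR 0 u x := rfl
@[simp] lemma gradq_imJ (u : (Fin 3 → ℝ) → ℝ) (x : Fin 3 → ℝ) : (gradq u x).imJ = pdR 1 u x := rfl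
@[simp] lemma gradq_imK (u : (Fin 3 → ℝ) → ℝ) (x : Fin 3 → ℝ) : (gradq u x).imK = pdR 2 u x := rfl

/-- `star` as a continuous linear map on quaternions. -/
def starCLM : Quaternion ℝ →L[ℝ] Quaternion ℝ :=
  LinearMap.toContinuousLinearMap
    { toFun := star
      map_add' := star_add
      map_smul' := fun r q => by simp }

@[simp] lemma starCLM_apply (q : Quaternion ℝ) : starCLM q = star q := rfl

/-- `imI` as a continuous linear map. -/
def imICLM : Quaternion ℝ →L[ℝ] ℝ :=
  LinearMap.toContinuousLinearMap (QuaternionAlgebra.imIₗ (-1 : ℝ) (0 : ℝ) (-1 : ℝ))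

@[simp] lemma imICLM_apply (q : Quaternion ℝ) : imICLM q = q.imI := rfl

/-- `imJ` as a continuous linear map. -/
def imJCLM : Quaternion ℝ →L[ℝ] ℝ :=
  LinearMap.toContinuousLinearMap (QuaternionAlgebra.imJₗ (-1 : ℝ) (0 : ℝ) (-1 : ℝ))

@[simp] lemma imJCLM_apply (q : Quaternion ℝ) : imJCLM q = q.imJ := rfl

/-- `imK` as a continuous linear map. -/
def imKCLM : Quaternion ℝ →L[ℝ] ℝ :=
  LinearMap.toContinuousLinearMap (QuaternionAlgebra.imKₗ (-1 : ℝ) (0 : ℝ) (-1 : ℝ))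

@[simp] lemma imKCLM_apply (q : Quaternion ℝ) : imKCLM q = q.imK := rfl

lemma divVec_eq (α : (Fin 3 → ℝ) → Quaternion ℝ) (x : Fin 3 → ℝ)
    (hα : DifferentiableAt ℝ α x) :
    divVec α x = (pd 0 α x).imI + (pd 1 α x).imJ + (pd 2 α x).imK := by
  have hI : HasFDerivAt (fun y => (α y).imI) (imICLM.comp (fderiv ℝ α x)) x :=
    imICLM.hasFDerivAt.comp x hα.hasFDerivAt
  have hJ : HasFDerivAt (fun y => (α y).imJ) (imJCLM.comp (fderiv ℝ α x)) x :=
    imJCLM.hasFDerivAt.comp x hα.hasFDerivAt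
  have hK : HasFDerivAt (fun y => (α y).imK) (imKCLM.comp (fderiv ℝ α x)) x :=
    imKCLM.hasFDerivAt.comp x hα.hasFDerivAt
  rw [divVec, pdR, pdR, pdR, hI.fderiv, hJ.fderiv, hK.fderiv]
  simp [pd]

lemma norm_sq_eq (a : Quaternion ℝ) :
    ‖a‖ ^ 2 = a.re ^ 2 + a.imI ^ 2 + a.imJ ^ 2 + a.imK ^ 2 := by
  rw [sq, ← Quaternion.normSq_eq_norm_mul_self, Quaternion.normSq_def']

/-- the Schrödinger operator
`−Δ + |α|² + |β|² + div(Vec α) − div(Vec β) + 2 Sc(αβ)` on scalar functions is the scalar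
part of the composition `(D − αC − β)(D − MᵅC − conj β)`. -/
theorem factorization_first (Ω : Set (Fin 3 → ℝ)) (hΩ : IsOpen Ω)
    (α β : (Fin 3 → ℝ) → Quaternion ℝ)
    (hα : ∀ x ∈ Ω, DifferentiableAt ℝ α x) (hβ : ∀ x ∈ Ω, DifferentiableAt ℝ β x)
    (h₀ : (Fin 3 → ℝ) → ℝ)
    (hh₀ : ∀ x ∈ Ω, DifferentiableAt ℝ h₀ x)
    (hh₀' : ∀ x ∈ Ω, DifferentiableAt ℝ (fderiv ℝ h₀) x) :
    ∀ x ∈ Ω,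
      (Dq (fun y => gradq h₀ y - h₀ y • α y - h₀ y • star (β y)) x
          - α x * star (gradq h₀ x - h₀ x • α x - h₀ x • star (β x))
          - β x * (gradq h₀ x - h₀ x • α x - h₀ x • star (β x))).re =
        -lapl h₀ x +
          (‖α x‖ ^ 2 + ‖β x‖ ^ 2 + divVec α x - divVec β x
            + 2 * (α x * β x).re) * h₀ x := by
  intro x hx
  have hα' := hα x hx
  have hβ' := hβ x hx
  have hh := hh₀ x hx
  have hh' := hh₀' x hx
  -- the partial derivatives of `h₀` are differentiable
  set D : Fin 3 → ((Fin 3 → ℝ) →L[ℝ] ℝ) := fun j =>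
    (ContinuousLinearMap.apply ℝ ℝ (Pi.single j 1)).comp (fderiv ℝ (fderiv ℝ h₀) x) with hD
  have hpdR : ∀ j : Fin 3, HasFDerivAt (pdR j h₀) (D j) x := by
    intro j
    have := (ContinuousLinearMap.apply ℝ ℝ (Pi.single j 1 : Fin 3 → ℝ)).hasFDerivAt.comp x
      hh'.hasFDerivAt
    exact this
  have hgradfun : gradq h₀ = fun y => pdR 0 h₀ y • qi + pdR 1 h₀ y • qj + pdR 2 h₀ y • qk := by
    funext y
    ext <;> simp [gradq]
  have Hgrad : HasFDerivAt (gradq h₀)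
      ((D 0).smulRight qi + (D 1).smulRight qj + (D 2).smulRight qk) x := by
    rw [hgradfun]
    exact (((hpdR 0).smul_const qi).add ((hpdR 1).smul_const qj)).add ((hpdR 2).smul_const qk)
  have Hstar : HasFDerivAt (fun y => star (β y)) (starCLM.comp (fderiv ℝ β x)) x :=
    starCLM.hasFDerivAt.comp x hβ'.hasFDerivAt
  have Hsa : HasFDerivAt (fun y => h₀ y • α y)
      (h₀ x • fderiv ℝ α x + (fderiv ℝ h₀ x).smulRight (α x)) x :=
    hh.hasFDerivAt.smul hα'.hasFDerivAt
  have Hsb : HasFDerivAt (fun y => h₀ y • star (β y))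
      (h₀ x • starCLM.comp (fderiv ℝ β x) + (fderiv ℝ h₀ x).smulRight (star (β x))) x :=
    hh.hasFDerivAt.smul Hstar
  have Hv := (Hgrad.sub Hsa).sub Hsb
  have hDval : ∀ i j : Fin 3, pdR i (pdR j h₀) x = D j (Pi.single i 1) := by
    intro i j
    rw [pdR, (hpdR j).fderiv]
  have hpdv : ∀ i : Fin 3,
      pd i (fun y => gradq h₀ y - h₀ y • α y - h₀ y • star (β y)) x
        = (pdR i (pdR 0 h₀) x • qi + pdR i (pdR 1 h₀) x • qj + pdR i (pdR 2 h₀) x • qk)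
          - (pdR i h₀ x • α x + h₀ x • pd i α x)
          - (pdR i h₀ x • star (β x) + h₀ x • star (pd i β x)) := by
    intro i
    rw [pd, show (fun y => gradq h₀ y - h₀ y • α y - h₀ y • star (β y)) = ((gradq h₀ - fun y => h₀ y • α y) - fun y => h₀ y • star (β y)) from rfl, Hv.fderiv, hDval i 0, hDval i 1, hDval i 2]
    simp only [ContinuousLinearMap.sub_apply, ContinuousLinearMap.add_apply,
      ContinuousLinearMap.smulRight_apply, ContinuousLinearMap.smul_apply,
      ContinuousLinearMap.comp_apply, starCLM_apply]
    rw [pd, pd, pdR]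
    abel
  rw [Dq, hpdv 0, hpdv 1, hpdv 2, divVec_eq α x hα', divVec_eq β x hβ',
    norm_sq_eq, norm_sq_eq, lapl]
  simp only [Quaternion.re_mul, Quaternion.re_add, Quaternion.re_sub, Quaternion.re_smul,
    Quaternion.imI_add, Quaternion.imI_sub, Quaternion.imI_smul,
    Quaternion.imJ_add, Quaternion.imJ_sub, Quaternion.imJ_smul,
    Quaternion.imK_add, Quaternion.imK_sub, Quaternion.imK_smul,
    Quaternion.re_star, Quaternion.imI_star, Quaternion.imJ_star, Quaternion.imK_star,
    qi_re, qi_imI, qi_imJ, qi_imK, qj_re, qj_imI, qj_imJ, qj_imK,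
    qk_re, qk_imI, qk_imJ, qk_imK, smul_eq_mul,
    gradq_re, gradq_imI, gradq_imJ, gradq_imK]
  ring

end
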